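/- Let n be a natural number, x₁ a real number, y₁⁽⁰⁾, …, y₁⁽ⁿ⁾ real numbers, and g : ℝ → ℝ an n-times continuously differentiable function. Define y(x) = g(x) + Σ_{k=0}^{n} ((x - x₁)ᵏ/k!)·(y₁⁽ᵏ⁾ - g⁽ᵏ⁾(x₁)). Then for every j with 0 ≤ j ≤ n, the j-th iterated derivative of y at x₁ equals y₁⁽ʲ⁾. -/

import Mathlib

open Finset

lemma iteratedDeriv_add' {j : ℕ} {f g : ℝ → ℝ} (hf : ContDiff ℝ j f) (hg : ContDiff ℝ j g)
    (x : ℝ) : iteratedDeriv j (fun x => f x + g x) x = iteratedDeriv j f x + iteratedDeriv j g x := by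
  simp only [← iteratedDerivWithin_univ]
  exact iteratedDerivWithin_add (Set.mem_univ x) uniqueDiffOn_univ hf.contDiffWithinAt hg.contDiffWithinAt

lemma iteratedDeriv_fun_sum' {ι : Type*} {u : Finset ι} {f : ι → ℝ → ℝ} {j : ℕ}
    (h : ∀ i ∈ u, ContDiff ℝ j (f i)) (x : ℝ) :
    iteratedDeriv j (fun x => ∑ i ∈ u, f i x) x = ∑ i ∈ u, iteratedDeriv j (f i) x := by
  simp only [iteratedDeriv_eq_iteratedFDeriv]
  rw [iteratedFDeriv_sum h]
  simp

lemma iteratedDeriv_pow' (k j : ℕ) :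
    iteratedDeriv j (fun x : ℝ => x ^ k) = fun x => (k.descFactorial j : ℝ) * x ^ (k - j) := by
  induction j with
  | zero => simp
  | succ j ih =>
    rw [iteratedDeriv_succ, ih]
    funext x
    rw [deriv_const_mul _ (by fun_prop)]
    rw [deriv_pow_field]
    rw [Nat.descFactorial_succ]
    push_cast
    ring_nf
    rcases le_or_gt k j with h | h
    · simp [Nat.sub_eq_zero_of_le h, Nat.sub_eq_zero_of_le (h.trans j.le_succ)]
    · rw [Nat.sub_sub, Nat.add_comm]

lemma iteratedDeriv_const_mul'' (j : ℕ) (c : ℝ) {f : ℝ → ℝ} (hf : ContDiff ℝ j f) (x : ℝ) :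
    iteratedDeriv j (fun x => c * f x) x = c * iteratedDeriv j f x := by
  simp only [← iteratedDerivWithin_univ]
  exact iteratedDerivWithin_const_mul (Set.mem_univ x) uniqueDiffOn_univ c hf.contDiffWithinAt

lemma pow_at_zero (k j : ℕ) :
    iteratedDeriv j (fun x : ℝ => x ^ k) 0 = if k = j then (j.factorial : ℝ) else 0 := by
  rw [iteratedDeriv_pow']
  rcases lt_trichotomy k j with h | rfl | h
  · simp [Nat.descFactorial_eq_zero_iff_lt.mpr h, h.ne]
  · simp [Nat.descFactorial_self]
  · simp [zero_pow (Nat.sub_ne_zero_of_lt h), h.ne']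

lemma term_eval (j k : ℕ) (x₁ c : ℝ) :
    iteratedDeriv j (fun x : ℝ => (x - x₁) ^ k / (k.factorial : ℝ) * c) x₁ =
      if k = j then c else 0 := by
  have h1 : (fun x : ℝ => (x - x₁) ^ k / (k.factorial : ℝ) * c) =
      fun x => (c / (k.factorial : ℝ)) * (fun z : ℝ => z ^ k) (x + -x₁) := by
    funext x; rw [sub_eq_add_neg]; ring
  rw [h1, iteratedDeriv_const_mul'' j _ (by fun_prop),
    iteratedDeriv_comp_add_const j (fun z : ℝ => z ^ k) (-x₁)]
  simp only [add_neg_cancel, pow_at_zero]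
  rcases eq_or_ne k j with rfl | h
  · simp [div_mul_cancel₀, Nat.factorial_ne_zero,
      (Nat.cast_ne_zero (R := ℝ)).mpr k.factorial_ne_zero]
  · simp [h]

theorem taylor_constrained_expression
    (n : ℕ) (x₁ : ℝ) (Y : ℕ → ℝ) (g : ℝ → ℝ) (hg : ContDiff ℝ n g) :
    ∀ j ≤ n,
      iteratedDeriv j
        (fun x => g x + ∑ k ∈ Finset.range (n + 1),
            (x - x₁) ^ k / (k.factorial : ℝ) * (Y k - iteratedDeriv k g x₁)) x₁ = Y j := by
  intro j hj
  have hj' : (j : WithTop ℕ∞) ≤ (n : WithTop ℕ∞) := by exact_mod_cast hj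
  rw [iteratedDeriv_add' (hg.of_le hj') (ContDiff.sum fun i _ => by
      simp only [div_eq_mul_inv]; fun_prop) x₁,
    iteratedDeriv_fun_sum' (fun i _ => by
      simp only [div_eq_mul_inv]; fun_prop) x₁]
  simp only [term_eval]
  rw [Finset.sum_ite_eq' (Finset.range (n + 1)) j]
  simp [Finset.mem_range, Nat.lt_succ_of_le hj]
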